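/- arXiv:2403.04431 — 3 statements merged into one kernel-verified Lean document; each statement's English description precedes it below -/
import Mathlib

section
/- Let {a(k)} be a sequence of nonnegative real numbers and {b(k)} a sequence of real numbers that is eventually nonnegative, i.e., there exists k̃ ≥ 0 such that b(k) ≥ 0 for all k ≥ k̃. Suppose ∑_{k=0}^∞ a(k) = ∞ and ∑_{k=0}^∞ a(k) b(k) < ∞ (the series of products converges). Then there exists a subsequence {b(k_t)} of {b(k)} (i.e., a strictly increasing map t ↦ k_t from ℕ to ℕ) such that lim_{t→∞} b(k_t) = 0. -/
open Filter Topology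

/-- Lemma 3 of the paper: if `a(k) ≥ 0` with `∑ a(k) = ∞`, `b(k)` is eventually
nonnegative, and `∑ a(k) b(k)` converges, then there is a subsequence of `b`
converging to `0`. -/
theorem exists_subseq_tendsto_zero
    (a b : ℕ → ℝ)
    (ha_nonneg : ∀ k, 0 ≤ a k)
    (hb_eventually_nonneg : ∃ ktilde : ℕ, ∀ k ≥ ktilde, 0 ≤ b k)
    (ha_div : Tendsto (fun n => ∑ k ∈ Finset.range n, a k) atTop atTop)
    (hab_sum : Summable fun k => a k * b k) :
    ∃ φ : ℕ → ℕ, StrictMono φ ∧ Tendsto (fun t => b (φ t)) atTop (𝓝 0) := by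
  obtain ⟨kt, hkt⟩ := hb_eventually_nonneg
  have key : ∀ ε > (0:ℝ), ∃ᶠ k in atTop, |b k| < ε := by
    intro ε hε
    by_contra h
    rw [not_frequently] at h
    have hns : ¬ Summable a :=
      (not_summable_iff_tendsto_nat_atTop_of_nonneg ha_nonneg).2 ha_div
    obtain ⟨N, hN⟩ := eventually_atTop.1 h
    set M := max N kt with hM
    have hsum : Summable (fun k => a (k + M) * b (k + M)) :=
      (summable_nat_add_iff M).2 hab_sum
    have hmul : Summable (fun k => ε * a (k + M)) := by
      apply hsum.of_nonneg_of_le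
      · intro k
        exact mul_nonneg hε.le (ha_nonneg _)
      · intro k
        have hb0 : 0 ≤ b (k + M) :=
          hkt _ (le_trans (le_max_right N kt) (Nat.le_add_left _ _))
        have hge : ε ≤ |b (k + M)| := by
          have := hN (k + M) (le_trans (le_max_left N kt) (Nat.le_add_left _ _))
          simpa using not_lt.1 this
        rw [abs_of_nonneg hb0] at hge
        calc ε * a (k + M) ≤ b (k + M) * a (k + M) :=
              mul_le_mul_of_nonneg_right hge (ha_nonneg _)
          _ = a (k + M) * b (k + M) := mul_comm _ _
    have hsa : Summable (fun k => a (k + M)) :=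
      (summable_mul_left_iff hε.ne').1 hmul
    exact hns ((summable_nat_add_iff M).1 hsa)
  have hfreq : ∀ n : ℕ, ∃ᶠ k in atTop, |b k| < 1 / (n + 1) :=
    fun n => key _ (by positivity)
  obtain ⟨φ, hφ, hP⟩ := extraction_forall_of_frequently hfreq
  refine ⟨φ, hφ, ?_⟩
  apply squeeze_zero_norm (fun n => (hP n).le)
  exact tendsto_one_div_add_atTop_nhds_zero_nat
end

section
/- Let Θ ⊂ ℝ^m be a nonempty convex compact set, let g_i : ℝ^m → ℝ be convex for i = 1,…,N, let α* = min_{θ∈Θ} max_{i=1,…,N} g_i(θ), let ḡ_i((θ,α)) = max{g_i(θ) − α, 0}, and let p_i > 1 for all i. Then for θ ∈ Θ and α ∈ ℝ, equality α + ∑_{i=1}^N p_i ḡ_i((θ,α)) = α* holds if and only if α = α* and max_{i=1,…,N} g_i(θ) = α* (i.e., θ is an optimal solution of the minmax problem). -/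
open Filter Topology

/-- Lemma 4 of the paper (equality case): with `α* = min_{θ∈Θ} max_i g_i(θ)` and
penalty weights `p_i > 1`, for `θ ∈ Θ` and `α ∈ ℝ`, equality
`α + ∑ i, p i · max{g_i(θ) − α, 0} = α*` holds if and only if `α = α*` and
`max_i g_i(θ) = α*` (i.e., `θ` is optimal for the minmax problem). -/
theorem penalty_eq_minmax_iff
    {m : ℕ} {ι : Type*} [Fintype ι] [Nonempty ι]
    (Θ : Set (EuclideanSpace ℝ (Fin m)))
    (hΘne : Θ.Nonempty) (hΘconv : Convex ℝ Θ) (hΘcomp : IsCompact Θ)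
    (g : ι → EuclideanSpace ℝ (Fin m) → ℝ)
    (hg : ∀ i, ConvexOn ℝ Set.univ (g i))
    (p : ι → ℝ) (hp : ∀ i, 1 < p i)
    (αstar : ℝ)
    (hαstar : IsLeast ((fun θ => ⨆ i, g i θ) '' Θ) αstar) :
    ∀ θ ∈ Θ, ∀ α : ℝ,
      (α + ∑ i, p i * max (g i θ - α) 0 = αstar ↔
        α = αstar ∧ (⨆ i, g i θ) = αstar) := by
  intro θ hθ α
  have hbdd : BddAbove (Set.range fun i => g i θ) :=
    (Set.finite_range _).bddAbove
  obtain ⟨j, hj⟩ := Finite.exists_max (fun i => g i θ)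
  have hsup : (⨆ i, g i θ) = g j θ :=
    le_antisymm (ciSup_le hj) (le_ciSup hbdd j)
  have hstar_le : αstar ≤ ⨆ i, g i θ :=
    hαstar.2 ⟨θ, hθ, rfl⟩
  have hterm_nonneg : ∀ i : ι, 0 ≤ p i * max (g i θ - α) 0 := fun i =>
    mul_nonneg (le_of_lt (lt_trans one_pos (hp i))) (le_max_right _ _)
  constructor
  · intro h
    -- each term bounds g i θ
    have hgi : ∀ i : ι, g i θ ≤ αstar := by
      intro i
      have h1 : p i * max (g i θ - α) 0 ≤ ∑ k, p k * max (g k θ - α) 0 :=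
        Finset.single_le_sum (fun k _ => hterm_nonneg k) (Finset.mem_univ i)
      have h2 : g i θ - α ≤ p i * max (g i θ - α) 0 := by
        calc g i θ - α ≤ max (g i θ - α) 0 := le_max_left _ _
          _ = 1 * max (g i θ - α) 0 := (one_mul _).symm
          _ ≤ p i * max (g i θ - α) 0 :=
            mul_le_mul_of_nonneg_right (le_of_lt (hp i)) (le_max_right _ _)
      linarith
    have hsup_eq : (⨆ i, g i θ) = αstar :=
      le_antisymm (hsup ▸ hgi j) hstar_le
    refine ⟨?_, hsup_eq⟩
    have hsum_nonneg : 0 ≤ ∑ k, p k * max (g k θ - α) 0 :=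
      Finset.sum_nonneg fun k _ => hterm_nonneg k
    have hα_le : α ≤ αstar := by linarith
    by_contra hne
    have hαlt : α < αstar := lt_of_le_of_ne hα_le hne
    have hgj : g j θ = αstar := by rw [← hsup, hsup_eq]
    have hterm : p j * max (g j θ - α) 0 > αstar - α := by
      rw [hgj, max_eq_left (by linarith)]
      nlinarith [hp j]
    have h1 : p j * max (g j θ - α) 0 ≤ ∑ k, p k * max (g k θ - α) 0 :=
      Finset.single_le_sum (fun k _ => hterm_nonneg k) (Finset.mem_univ j)
    linarith
  · rintro ⟨rfl, hsupeq⟩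
    have hzero : ∀ i : ι, p i * max (g i θ - α) 0 = 0 := by
      intro i
      have : g i θ ≤ α := by
        have := le_ciSup hbdd i
        linarith [hsupeq ▸ this]
      rw [max_eq_right (by linarith), mul_zero]
    rw [Finset.sum_congr rfl fun i _ => hzero i, Finset.sum_const_zero, add_zero]
end

section
/- Let Θ ⊂ ℝ^m be a nonempty convex compact set with Euclidean projection P_Θ, let g_i : ℝ^m → ℝ be convex for i = 1,…,N, and let θ* ∈ Θ, α* ∈ ℝ satisfy g_i(θ*) ≤ α* for all i. Let θ ∈ Θ, α ∈ ℝ, η > 0, let h_1,…,h_N be positive reals with ∑_{i=1}^N h_i = 1, and let p_1,…,p_N satisfy 0 < p_i ≤ p_max. Set v = α − η/N; for each i let u_i be a subgradient of g_i at θ with ‖u_i‖ ≤ L, let χ_i = 1 if g_i(θ) ≥ v and χ_i = 0 otherwise, and define θ_i = θ − η p_i χ_i u_i, α_i = v + η p_i χ_i, θ⁺ = P_Θ(∑_{i=1}^N h_i θ_i), α⁺ = ∑_{i=1}^N h_i α_i. Then, with ḡ_i((θ,α)) = max{g_i(θ) − α, 0}, the following one-step descent inequality holds: ‖θ⁺ −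 θ*‖² + (α⁺ − α*)² ≤ ‖θ − θ*‖² + (α − α*)² − (2η/N)(α − α*) − 2η ∑_{i=1}^N h_i p_i ḡ_i((θ,α)) + η² ( p_max²(L² + 1) + 1/N² + 2 p_max / N ). -/
open RealInnerProductSpace

lemma fedfair_proj_nonexp {m : ℕ} {Θ : Set (EuclideanSpace ℝ (Fin m))} (hconv : Convex ℝ Θ)
    {x s Px : EuclideanSpace ℝ (Fin m)} (hs : s ∈ Θ) (hPx : Px ∈ Θ)
    (hmin : ∀ t ∈ Θ, ‖Px - x‖ ≤ ‖t - x‖) : ‖Px - s‖ ≤ ‖x - s‖ := by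
  have hkey : 0 ≤ ⟪Px - x, s - Px⟫ := by
    by_contra hneg
    push_neg at hneg
    set c : ℝ := ⟪Px - x, s - Px⟫ with hc
    set D : ℝ := ‖s - Px‖ ^ 2 with hD
    have hD0 : 0 < D := by
      rcases eq_or_ne s Px with hsp | hsp
      · exfalso
        rw [hc, hsp, sub_self, inner_zero_right] at hneg
        exact lt_irrefl 0 hneg
      · have hne : s - Px ≠ 0 := sub_ne_zero.mpr hsp
        rw [hD]
        exact pow_pos (norm_pos_iff.mpr hne) 2
    set t : ℝ := min 1 (-c / D) with htdef
    have ht0 : 0 < t := lt_min one_pos (div_pos (neg_pos.mpr hneg) hD0)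
    have ht1 : t ≤ 1 := min_le_left _ _
    have htD : t * D ≤ -c := by
      have h1 : t ≤ -c / D := min_le_right _ _
      calc t * D ≤ (-c / D) * D := by nlinarith
        _ = -c := by field_simp
    have hmem : Px + t • (s - Px) ∈ Θ :=
      hconv.add_smul_sub_mem hPx hs ⟨le_of_lt ht0, ht1⟩
    have hle := hmin _ hmem
    have hre : Px + t • (s - Px) - x = (Px - x) + t • (s - Px) := by abel
    have hexp : ‖Px + t • (s - Px) - x‖ ^ 2 = ‖Px - x‖ ^ 2 + 2 * t * c + t ^ 2 * D := by
      rw [hre, norm_add_sq_real, real_inner_smul_right, norm_smul, Real.norm_eq_abs,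
        abs_of_pos ht0, mul_pow, hc, hD]
      ring
    have hsq : ‖Px - x‖ ^ 2 ≤ ‖Px + t • (s - Px) - x‖ ^ 2 :=
      pow_le_pow_left₀ (norm_nonneg _) hle 2
    rw [hexp] at hsq
    nlinarith [mul_pos ht0 (neg_pos.mpr hneg)]
  have h1 : ‖x - s‖ ^ 2 = ‖x - Px‖ ^ 2 + 2 * ⟪x - Px, Px - s⟫ + ‖Px - s‖ ^ 2 := by
    have h0 := norm_add_sq_real (x - Px) (Px - s)
    rw [sub_add_sub_cancel] at h0
    linarith [h0]
  have h2 : ⟪x - Px, Px - s⟫ = ⟪Px - x, s - Px⟫ := by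
    rw [← neg_sub Px x, ← neg_sub s Px, inner_neg_neg]
  have hsq : ‖Px - s‖ ^ 2 ≤ ‖x - s‖ ^ 2 := by nlinarith [sq_nonneg ‖x - Px‖]
  calc ‖Px - s‖ = Real.sqrt (‖Px - s‖ ^ 2) := (Real.sqrt_sq (norm_nonneg _)).symm
    _ ≤ Real.sqrt (‖x - s‖ ^ 2) := Real.sqrt_le_sqrt hsq
    _ = ‖x - s‖ := Real.sqrt_sq (norm_nonneg _)


set_option maxHeartbeats 1000000 in
/-- Deterministic one-step descent inequality for the FedFAir iteration: the server
shifts `α` by `−η/N`, each agent takes a subgradient step on `p_i ḡ_i`, and the server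
aggregates with normalized weights `h_i` and projects onto `Θ`. -/
theorem fedfair_one_step_descent
    {m N : ℕ} (hN : 0 < N)
    (Θ : Set (EuclideanSpace ℝ (Fin m)))
    (hΘne : Θ.Nonempty) (hΘconv : Convex ℝ Θ) (hΘcomp : IsCompact Θ)
    (P : EuclideanSpace ℝ (Fin m) → EuclideanSpace ℝ (Fin m))
    (hPmem : ∀ x, P x ∈ Θ)
    (hPproj : ∀ x, ∀ s ∈ Θ, ‖P x - x‖ ≤ ‖s - x‖)
    (g : Fin N → EuclideanSpace ℝ (Fin m) → ℝ)
    (hg : ∀ i, ConvexOn ℝ Set.univ (g i))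
    (θstar : EuclideanSpace ℝ (Fin m)) (hθstar : θstar ∈ Θ)
    (αstar : ℝ) (hfeas : ∀ i, g i θstar ≤ αstar)
    (θ : EuclideanSpace ℝ (Fin m)) (hθ : θ ∈ Θ) (α : ℝ)
    (η : ℝ) (hη : 0 < η)
    (h : Fin N → ℝ) (hh_pos : ∀ i, 0 < h i) (hh_sum : ∑ i, h i = 1)
    (p : Fin N → ℝ) (pmax : ℝ) (hp_pos : ∀ i, 0 < p i) (hp_max : ∀ i, p i ≤ pmax)
    (v : ℝ) (hv : v = α - η / N)
    (u : Fin N → EuclideanSpace ℝ (Fin m)) (L : ℝ)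
    (hsub : ∀ i, ∀ y, g i θ + ⟪u i, y - θ⟫ ≤ g i y)
    (hL : ∀ i, ‖u i‖ ≤ L)
    (χ : Fin N → ℝ) (hχ : ∀ i, χ i = if v ≤ g i θ then 1 else 0)
    (θi : Fin N → EuclideanSpace ℝ (Fin m))
    (hθi : ∀ i, θi i = θ - (η * p i * χ i) • u i)
    (αi : Fin N → ℝ) (hαi : ∀ i, αi i = v + η * p i * χ i)
    (θplus : EuclideanSpace ℝ (Fin m)) (hθplus : θplus = P (∑ i, h i • θi i))
    (αplus : ℝ) (hαplus : αplus = ∑ i, h i * αi i) :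
    ‖θplus - θstar‖ ^ 2 + (αplus - αstar) ^ 2 ≤
      ‖θ - θstar‖ ^ 2 + (α - αstar) ^ 2 - (2 * η / N) * (α - αstar)
        - 2 * η * ∑ i, h i * p i * max (g i θ - α) 0
        + η ^ 2 * (pmax ^ 2 * (L ^ 2 + 1) + 1 / (N : ℝ) ^ 2 + 2 * pmax / N) := by
  subst hv
  have hNpos : (0 : ℝ) < N := Nat.cast_pos.mpr hN
  have hdiv : 0 < η / N := div_pos hη hNpos
  have i0 : Fin N := ⟨0, hN⟩
  have hL0 : 0 ≤ L := le_trans (norm_nonneg _) (hL i0)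
  have hpm : 0 < pmax := lt_of_lt_of_le (hp_pos i0) (hp_max i0)
  have hχ01 : ∀ i, 0 ≤ χ i ∧ χ i ≤ 1 := by
    intro i; rw [hχ i]; split_ifs <;> norm_num
  set w : EuclideanSpace ℝ (Fin m) := ∑ i, (h i * p i * χ i) • u i with hw
  set q : ℝ := ∑ i, h i * p i * χ i with hq
  set G : ℝ := ∑ i, h i * p i * max (g i θ - α) 0 with hG
  set B : ℝ := ⟪θ - θstar, w⟫ with hB
  have hcoef_nonneg : ∀ i : Fin N, 0 ≤ h i * p i * χ i := fun i =>
    mul_nonneg (mul_nonneg (hh_pos i).le (hp_pos i).le) (hχ01 i).1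
  have hq0 : 0 ≤ q := Finset.sum_nonneg fun i _ => hcoef_nonneg i
  have hqp : q ≤ pmax := by
    rw [hq]
    calc ∑ i, h i * p i * χ i ≤ ∑ i, h i * pmax := by
          apply Finset.sum_le_sum
          intro i _
          have h2 := (hχ01 i).2
          have c1 := mul_le_mul_of_nonneg_left h2
            (mul_nonneg (hh_pos i).le (hp_pos i).le)
          have c2 := mul_le_mul_of_nonneg_left (hp_max i) (hh_pos i).le
          nlinarith [c1, c2]
      _ = pmax := by rw [← Finset.sum_mul, hh_sum, one_mul]
  have hhpsum : ∑ i, h i * p i ≤ pmax := by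
    calc ∑ i, h i * p i ≤ ∑ i, h i * pmax := by
          apply Finset.sum_le_sum
          intro i _
          exact mul_le_mul_of_nonneg_left (hp_max i) (hh_pos i).le
      _ = pmax := by rw [← Finset.sum_mul, hh_sum, one_mul]
  have hnormw : ‖w‖ ≤ pmax * L := by
    rw [hw]
    calc ‖∑ i, (h i * p i * χ i) • u i‖ ≤ ∑ i, ‖(h i * p i * χ i) • u i‖ :=
          norm_sum_le _ _
      _ ≤ ∑ i, h i * (pmax * L) := by
          apply Finset.sum_le_sum
          intro i _
          rw [norm_smul, Real.norm_eq_abs, abs_of_nonneg (hcoef_nonneg i)]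
          have h2 := (hχ01 i).2
          have c1 := mul_le_mul_of_nonneg_left (hL i) (hcoef_nonneg i)
          have c2 := mul_le_mul_of_nonneg_right (mul_le_mul_of_nonneg_left h2
            (mul_nonneg (hh_pos i).le (hp_pos i).le)) hL0
          have c3 := mul_le_mul_of_nonneg_right
            (mul_le_mul_of_nonneg_left (hp_max i) (hh_pos i).le) hL0
          nlinarith [c1, c2, c3]
      _ = pmax * L := by rw [← Finset.sum_mul, hh_sum, one_mul]
  have hθagg : ∑ i, h i • θi i = θ - η • w := by
    have hterm : ∀ i : Fin N, h i • θi i = h i • θ - (η * (h i * p i * χ i)) • u i := by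
      intro i
      rw [hθi i, smul_sub, smul_smul]
      congr 2
      ring
    rw [Finset.sum_congr rfl fun i _ => hterm i, Finset.sum_sub_distrib,
      ← Finset.sum_smul, hh_sum, one_smul, hw, Finset.smul_sum]
    congr 1
    exact Finset.sum_congr rfl fun i _ => (smul_smul η _ _).symm
  have hαagg : αplus = (α - η / N) + η * q := by
    have hterm : ∀ i : Fin N, h i * αi i = h i * (α - η / N) + η * (h i * p i * χ i) :=
      fun i => by rw [hαi i]; ring
    rw [hαplus, Finset.sum_congr rfl fun i _ => hterm i, Finset.sum_add_distrib,
      ← Finset.sum_mul, hh_sum, one_mul, hq, Finset.mul_sum]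
  have hprojle : ‖θplus - θstar‖ ≤ ‖θ - η • w - θstar‖ := by
    rw [hθplus, hθagg]
    exact fedfair_proj_nonexp hΘconv hθstar (hPmem _) (fun t ht => hPproj _ t ht)
  have hexp : ‖θ - η • w - θstar‖ ^ 2 = ‖θ - θstar‖ ^ 2 - 2 * η * B + η ^ 2 * ‖w‖ ^ 2 := by
    have hre : θ - η • w - θstar = (θ - θstar) - η • w := by abel
    rw [hre, norm_sub_sq_real, real_inner_smul_right, norm_smul, Real.norm_eq_abs,
      abs_of_pos hη, mul_pow, hB]
    ring
  have key1 : ‖θplus - θstar‖ ^ 2 ≤ ‖θ - θstar‖ ^ 2 - 2 * η * B + η ^ 2 * ‖w‖ ^ 2 := by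
    rw [← hexp]
    exact pow_le_pow_left₀ (norm_nonneg _) hprojle 2
  have key2 : η ^ 2 * ‖w‖ ^ 2 ≤ η ^ 2 * (pmax ^ 2 * L ^ 2) := by
    have hsq : ‖w‖ ^ 2 ≤ pmax ^ 2 * L ^ 2 := by
      nlinarith [norm_nonneg w, mul_nonneg hpm.le hL0]
    exact mul_le_mul_of_nonneg_left hsq (sq_nonneg η)
  have key4 : η ^ 2 * q ^ 2 ≤ η ^ 2 * pmax ^ 2 := by
    have hsq : q ^ 2 ≤ pmax ^ 2 := by nlinarith
    exact mul_le_mul_of_nonneg_left hsq (sq_nonneg η)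
  have hBsum : B = ∑ i, (h i * p i * χ i) * ⟪θ - θstar, u i⟫ := by
    rw [hB, hw, inner_sum]
    exact Finset.sum_congr rfl fun i _ => real_inner_smul_right _ _ _
  have hterm : ∀ i : Fin N, h i * p i * (max (g i θ - α) 0 - η / N) ≤
      (h i * p i * χ i) * ⟪θ - θstar, u i⟫ +
        (h i * p i * χ i) * (αstar - (α - η / N)) := by
    intro i
    have hsg : g i θ - αstar ≤ ⟪θ - θstar, u i⟫ := by
      have h1 := hsub i θstar
      have h2 := hfeas i
      have h3 : ⟪u i, θstar - θ⟫ = - ⟪θ - θstar, u i⟫ := by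
        rw [real_inner_comm, ← inner_neg_left, neg_sub]
      linarith
    have hscal : max (g i θ - α) 0 - η / N ≤
        χ i * (⟪θ - θstar, u i⟫ + (αstar - (α - η / N))) := by
      rw [hχ i]
      split_ifs with hc
      · rw [one_mul]
        rcases le_or_gt (g i θ - α) 0 with h' | h'
        · rw [max_eq_right h']
          linarith
        · rw [max_eq_left h'.le]
          linarith
      · push_neg at hc
        rw [zero_mul, max_eq_right (by linarith)]
        linarith
    have hhp : 0 ≤ h i * p i := mul_nonneg (hh_pos i).le (hp_pos i).le
    have hmul := mul_le_mul_of_nonneg_left hscal hhp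
    calc h i * p i * (max (g i θ - α) 0 - η / N)
        ≤ h i * p i * (χ i * (⟪θ - θstar, u i⟫ + (αstar - (α - η / N)))) := hmul
      _ = (h i * p i * χ i) * ⟪θ - θstar, u i⟫ +
            (h i * p i * χ i) * (αstar - (α - η / N)) := by ring
  have key3' : G - (η / N) * pmax ≤ B + q * (αstar - (α - η / N)) := by
    have hS1 : ∑ i, h i * p i * (max (g i θ - α) 0 - η / N)
        = G - (η / N) * ∑ i, h i * p i := by
      rw [hG, Finset.mul_sum, ← Finset.sum_sub_distrib]
      exact Finset.sum_congr rfl fun i _ => by ring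
    have hS2 : ∑ i, ((h i * p i * χ i) * ⟪θ - θstar, u i⟫ +
        (h i * p i * χ i) * (αstar - (α - η / N)))
        = B + q * (αstar - (α - η / N)) := by
      rw [Finset.sum_add_distrib, ← Finset.sum_mul, ← hq, ← hBsum]
    calc G - (η / N) * pmax
        ≤ G - (η / N) * ∑ i, h i * p i := by
          have := mul_le_mul_of_nonneg_left hhpsum hdiv.le
          linarith
      _ = ∑ i, h i * p i * (max (g i θ - α) 0 - η / N) := hS1.symm
      _ ≤ _ := Finset.sum_le_sum fun i _ => hterm i
      _ = B + q * (αstar - (α - η / N)) := hS2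
  have key3 : 2 * η * (G - (η / N) * pmax) ≤ 2 * η * (B + q * (αstar - (α - η / N))) :=
    mul_le_mul_of_nonneg_left key3' (by positivity)
  have key5 : (αplus - αstar) ^ 2 = (α - αstar) ^ 2 - 2 * (η / N) * (α - αstar)
      + (η / N) ^ 2 + 2 * η * q * ((α - η / N) - αstar) + η ^ 2 * q ^ 2 := by
    rw [hαagg]
    ring
  have hNexp : (η / N) ^ 2 = η ^ 2 * (1 / (N : ℝ) ^ 2) := by
    field_simp
  have hNexp2 : 2 * η * ((η / N) * pmax) = η ^ 2 * (2 * pmax / N) := by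
    field_simp
  ring_nf at key1 key2 key3 key4 key5 ⊢
  linarith [key1, key2, key3, key4, key5]
end
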